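/- Let G be a finite d-regular graph, v a vertex, and s ≥ 1 an integer. Then the number of connected vertex subsets of G of size s containing v is at most (4d)^{s-1}. -/

import Mathlib

open SimpleGraph

section Aux

variable {V : Type*} [Fintype V] [DecidableEq V]

/-- One step of the DFS stack machine. -/
def dfsStep {d : ℕ} (nth : V → Fin d → V) :
    (List V × Finset V) → Option (Fin d) → (List V × Finset V)
  | (c :: st, A), some i => (nth c i :: c :: st, insert (nth c i) A)
  | ([], A), some _ => ([], A)
  | (st, A), none => (st.tail, A)

/-- There is a walk from `a` to `b` staying inside `T`. -/
def ReachIn (G : SimpleGraph V) (T : Finset V) (a b : V) : Prop :=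
  ∃ w : G.Walk a b, ∀ z ∈ w.support, z ∈ T

/-- All pairs of vertices of `S` are joined by walks inside `S`. -/
def GoodSet (G : SimpleGraph V) (S : Finset V) : Prop :=
  ∀ x ∈ S, ∀ y ∈ S, ReachIn G S x y

theorem goodSet_of_connected (G : SimpleGraph V) (S : Finset V)
    (h : (G.induce (S : Set V)).Connected) : GoodSet G S := by
  intro x hx y hy
  obtain ⟨w⟩ := h.preconnected ⟨x, hx⟩ ⟨y, hy⟩
  refine ⟨w.map (SimpleGraph.Embedding.induce (S : Set V)).toHom, ?_⟩
  intro z hz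
  erw [SimpleGraph.Walk.support_map] at hz
  obtain ⟨⟨z', hz'⟩, _, rfl⟩ := List.mem_map.1 hz
  exact hz'

end Aux

section Main

variable {V : Type*} [Fintype V] [DecidableEq V] (G : SimpleGraph V)

/-- Every vertex on a walk inside `T` starting at `u` is `ReachIn`-reachable from `u`. -/
theorem reachIn_of_mem_support (T : Finset V) {u b : V} (w : G.Walk u b)
    (hw : ∀ z ∈ w.support, z ∈ T) {z : V} (hz : z ∈ w.support) :
    ReachIn G T u z :=
  ⟨w.takeUntil z hz, fun y hy => hw y (SimpleGraph.Walk.support_takeUntil_subset w hz hy)⟩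

/-- If `C` is "closed" in `S` except at `r`, then any vertex of `S \ C` with a
walk to `r` inside `S` has a walk to `r` inside `S \ C`. -/
theorem walk_avoid (S C : Finset V) (r : V) (hrD : r ∈ S \ C)
    (hclosed : ∀ a c, G.Adj a c → c ∈ C → a ∈ S → a ≠ r → a ∈ C) :
    ∀ (x b : V) (w : G.Walk x b), (∀ z ∈ w.support, z ∈ S) → b = r → x ∈ S \ C →
      ReachIn G (S \ C) x r := by
  intro x b w
  induction w with
  | nil =>
    intro _ hb hx
    exact ⟨(SimpleGraph.Walk.nil : G.Walk _ _).copy rfl hb, by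
      intro z hz
      simp only [SimpleGraph.Walk.support_copy, SimpleGraph.Walk.support_nil,
        List.mem_singleton] at hz
      exact hz ▸ hx⟩
  | @cons a c b hadj w ih =>
    intro hsupp hb hx
    by_cases har : a = r
    · exact ⟨(SimpleGraph.Walk.nil : G.Walk a a).copy rfl har, by
        intro z hz
        simp only [SimpleGraph.Walk.support_copy, SimpleGraph.Walk.support_nil,
          List.mem_singleton] at hz
        exact hz ▸ hx⟩
    by_cases hcr : c = r
    · refine ⟨(SimpleGraph.Walk.cons hadj SimpleGraph.Walk.nil).copy rfl hcr, ?_⟩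
      intro z hz
      simp only [SimpleGraph.Walk.support_copy, SimpleGraph.Walk.support_cons,
        SimpleGraph.Walk.support_nil, List.mem_cons, List.mem_singleton] at hz
      rcases hz with rfl | rfl | h
      · exact hx
      · exact hcr ▸ hrD
      · simp at h
    · have hcS : c ∈ S := hsupp c (by simp)
      have hcC : c ∉ C := fun hcC =>
        (Finset.mem_sdiff.1 hx).2
          (hclosed a c hadj hcC (Finset.mem_sdiff.1 hx).1 har)
      have hcD : c ∈ S \ C := Finset.mem_sdiff.2 ⟨hcS, hcC⟩
      obtain ⟨w', hw'⟩ := ih (fun z hz => hsupp z (by simp [hz])) hb hcD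
      refine ⟨SimpleGraph.Walk.cons hadj w', ?_⟩
      intro z hz
      rw [SimpleGraph.Walk.support_cons] at hz
      rcases List.mem_cons.1 hz with rfl | h
      · exact hx
      · exact hw' z h

/-- Main lemma: every good set `S` with root `r` is traversed by a DFS program of
length `2(|S|-1)` with `|S|-1` forward moves. -/
theorem dfs_exists {d : ℕ} (nth : V → Fin d → V)
    (hnth : ∀ r u, G.Adj r u → ∃ i, nth r i = u) :
    ∀ (n : ℕ) (S : Finset V), S.card ≤ n → GoodSet G S → ∀ r ∈ S,
      ∃ p : List (Option (Fin d)),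
        p.length = 2 * (S.card - 1) ∧
        p.countP (fun o => o.isSome) = S.card - 1 ∧
        ∀ st A, r ∈ A → List.foldl (dfsStep nth) (r :: st, A) p = (r :: st, A ∪ S) := by
  intro n
  induction n with
  | zero =>
    intro S hS _ r hr
    simp only [Nat.le_zero, Finset.card_eq_zero] at hS
    simp [hS] at hr
  | succ n ih =>
    intro S hS hgood r hr
    by_cases h1 : S.card ≤ 1
    · have hS1 : S = {r} := by
        have : S.card = 1 := le_antisymm h1 (Finset.card_pos.2 ⟨r, hr⟩)
        obtain ⟨a, ha⟩ := Finset.card_eq_one.1 this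
        subst ha
        simp only [Finset.mem_singleton] at hr
        rw [hr]
      refine ⟨[], by simp [hS1], by simp [hS1], ?_⟩
      intro st A hA
      simp [hS1, Finset.union_eq_left.2 (Finset.singleton_subset_iff.2 hA)]
    · push_neg at h1
      obtain ⟨x, hxS, hxr⟩ := Finset.exists_mem_ne h1 r
      obtain ⟨w, hw⟩ := hgood r hr x hxS
      -- extract first edge of the walk
      obtain ⟨u, hadj, huS⟩ : ∃ u, G.Adj r u ∧ u ∈ S := by
        cases w with
        | nil => exact absurd rfl hxr.symm
        | cons hadj w' =>
          exact ⟨_, hadj, hw _ (by simp [SimpleGraph.Walk.support_cons])⟩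
      have hur : u ≠ r := hadj.ne'
      set S' := S.erase r with hS'
      have huS' : u ∈ S' := Finset.mem_erase.2 ⟨hur, huS⟩
      letI : DecidablePred (fun z => ReachIn G S' u z) := Classical.decPred _
      set C := S'.filter (fun z => ReachIn G S' u z) with hCdef
      have hCmem : ∀ z, z ∈ C ↔ z ∈ S' ∧ ReachIn G S' u z := by
        intro z; simp [hCdef]
      have huC : u ∈ C := (hCmem u).2 ⟨huS', ⟨SimpleGraph.Walk.nil, by
        intro z hz
        simp only [SimpleGraph.Walk.support_nil, List.mem_singleton] at hz
        exact hz ▸ huS'⟩⟩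
      have hCS' : C ⊆ S' := Finset.filter_subset _ _
      have hCS : C ⊆ S := hCS'.trans (Finset.erase_subset _ _)
      have hrC : r ∉ C := fun h => (Finset.mem_erase.1 (hCS' h)).1 rfl
      set D := S \ C with hDdef
      have hrD : r ∈ D := Finset.mem_sdiff.2 ⟨hr, hrC⟩
      -- C is good
      have hgoodC : GoodSet G C := by
        intro a ha b hb
        obtain ⟨_, wa, hwa⟩ := (hCmem a).1 ha
        obtain ⟨_, wb, hwb⟩ := (hCmem b).1 hb
        refine ⟨wa.reverse.append wb, ?_⟩
        intro z hz
        rw [SimpleGraph.Walk.support_append] at hz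
        rcases List.mem_append.1 hz with hz | hz
        · rw [SimpleGraph.Walk.support_reverse] at hz
          have hz' : z ∈ wa.support := List.mem_reverse.1 hz
          exact (hCmem z).2 ⟨hwa z hz', reachIn_of_mem_support G S' wa hwa hz'⟩
        · have hz' : z ∈ wb.support := List.mem_of_mem_tail hz
          exact (hCmem z).2 ⟨hwb z hz', reachIn_of_mem_support G S' wb hwb hz'⟩
      -- D is good
      have hclosed : ∀ a c, G.Adj a c → c ∈ C → a ∈ S → a ≠ r → a ∈ C := by
        intro a c hac hcC haS har
        obtain ⟨_, wc, hwc⟩ := (hCmem c).1 hcC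
        have haS' : a ∈ S' := Finset.mem_erase.2 ⟨har, haS⟩
        refine (hCmem a).2 ⟨haS', ⟨wc.concat hac.symm, ?_⟩⟩
        intro z hz
        rw [SimpleGraph.Walk.support_concat] at hz
        rcases List.mem_append.1 hz with hz | hz
        · exact hwc z hz
        · simp only [List.mem_singleton] at hz
          exact hz ▸ haS'
      have hDroot : ∀ a ∈ D, ReachIn G D a r := by
        intro a ha
        obtain ⟨wa, hwa⟩ := hgood a (Finset.mem_sdiff.1 ha).1 r hr
        exact walk_avoid G S C r hrD hclosed a r wa hwa rfl ha
      have hgoodD : GoodSet G D := by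
        intro a ha b hb
        obtain ⟨wa, hwa⟩ := hDroot a ha
        obtain ⟨wb, hwb⟩ := hDroot b hb
        refine ⟨wa.append wb.reverse, ?_⟩
        intro z hz
        rw [SimpleGraph.Walk.support_append] at hz
        rcases List.mem_append.1 hz with hz | hz
        · exact hwa z hz
        · refine hwb z ?_
          have := List.mem_of_mem_tail hz
          rwa [SimpleGraph.Walk.support_reverse, List.mem_reverse] at this
      -- cardinalities
      have hC1 : 1 ≤ C.card := Finset.card_pos.2 ⟨u, huC⟩
      have hCcard : C.card ≤ S.card - 1 := by
        calc C.card ≤ S'.card := Finset.card_le_card hCS'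
        _ = S.card - 1 := Finset.card_erase_of_mem hr
      have hDcard : D.card = S.card - C.card := Finset.card_sdiff_of_subset hCS
      have hD1 : 1 ≤ D.card := Finset.card_pos.2 ⟨r, hrD⟩
      obtain ⟨p₁, hp₁len, hp₁cnt, hp₁run⟩ := ih C (by omega) hgoodC u huC
      obtain ⟨p₂, hp₂len, hp₂cnt, hp₂run⟩ := ih D (by omega) hgoodD r hrD
      obtain ⟨i, hi⟩ := hnth r u hadj
      refine ⟨some i :: (p₁ ++ (none :: p₂)), ?_, ?_, ?_⟩
      · simp only [List.length_cons, List.length_append, hp₁len, hp₂len]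
        omega
      · simp only [List.countP_cons, List.countP_append, hp₁cnt, hp₂cnt,
          Option.isSome_some, Option.isSome_none]
        norm_num
        omega
      · intro st A hA
        have step1 : dfsStep nth (r :: st, A) (some i) = (u :: r :: st, insert u A) := by
          simp [dfsStep, hi]
        rw [List.foldl_cons, step1, List.foldl_append,
          hp₁run (r :: st) (insert u A) (Finset.mem_insert_self u A),
          List.foldl_cons]
        have step2 : dfsStep nth (u :: r :: st, insert u A ∪ C) none
            = (r :: st, insert u A ∪ C) := by
          simp [dfsStep]
        rw [step2, hp₂run st (insert u A ∪ C)
          (Finset.mem_union_left _ (Finset.mem_insert_of_mem hA))]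
        congr 1
        rw [Finset.insert_union, Finset.insert_union, Finset.union_assoc,
          Finset.union_sdiff_of_subset hCS]
        exact Finset.insert_eq_self.2 (Finset.mem_union_right _ huS)

end Main

section Encode

variable {d : ℕ}

/-- Reconstruct a DFS program from a bit list and a choice list. -/
def buildProg : List Bool → List (Fin d) → List (Option (Fin d))
  | [], _ => []
  | true :: b, i :: f => some i :: buildProg b f
  | true :: b, [] => none :: buildProg b []
  | false :: b, f => none :: buildProg b f

theorem buildProg_encode : ∀ p : List (Option (Fin d)),
    buildProg (p.map Option.isSome) (p.filterMap id) = p := by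
  intro p
  induction p with
  | nil => rfl
  | cons o p ih =>
    cases o with
    | none => simpa [buildProg] using ih
    | some i => simpa [buildProg] using ih

theorem length_filterMap_id (p : List (Option (Fin d))) :
    (p.filterMap id).length = p.countP (fun o => o.isSome) := by
  induction p with
  | nil => rfl
  | cons o p ih =>
    cases o with
    | none => simpa [List.countP_cons] using ih
    | some i => simpa [List.countP_cons] using ih

theorem ofFn_get_cast {β : Type*} (l : List β) {n : ℕ} (h : n = l.length) :
    List.ofFn (fun j : Fin n => l.get (Fin.cast h j)) = l := by
  subst h
  exact List.ofFn_get l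

end Encode

/-- The number of connected vertex subsets of size `s` containing `v` in a finite
`d`-regular graph is at most `(4d)^(s-1)`. -/
theorem stmt_1 {V : Type*} [Fintype V] [DecidableEq V] (G : SimpleGraph V) [DecidableRel G.Adj]
    (d : ℕ) (hd : 1 ≤ d) (hreg : G.IsRegularOfDegree d) (v : V) (s : ℕ) (hs : 1 ≤ s) :
    {S : Finset V | S.card = s ∧ v ∈ S ∧ (G.induce (S : Set V)).Connected}.ncard ≤
      (4 * d) ^ (s - 1) := by
  classical
  -- a surjection from neighbor indices
  obtain ⟨nth, hnth⟩ : ∃ nth : V → Fin d → V, ∀ r u, G.Adj r u → ∃ i, nth r i = u := by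
    have hcard : ∀ r : V, (G.neighborFinset r).card = d := fun r => hreg r
    refine ⟨fun r i => ((Finset.equivFinOfCardEq (hcard r)).symm i : V), ?_⟩
    intro r u hadj
    have hu : u ∈ G.neighborFinset r := (SimpleGraph.mem_neighborFinset G r u).2 hadj
    refine ⟨Finset.equivFinOfCardEq (hcard r) ⟨u, hu⟩, ?_⟩
    simp
  set F : ((Fin (2 * (s - 1)) → Bool) × (Fin (s - 1) → Fin d)) → Finset V :=
    fun bf => (List.foldl (dfsStep nth) ([v], {v})
      (buildProg (List.ofFn bf.1) (List.ofFn bf.2))).2 with hF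
  have hsub : {S : Finset V | S.card = s ∧ v ∈ S ∧ (G.induce (S : Set V)).Connected}
      ⊆ Set.range F := by
    rintro S ⟨hScard, hvS, hSconn⟩
    obtain ⟨p, hplen, hpcnt, hprun⟩ :=
      dfs_exists G nth hnth S.card S le_rfl (goodSet_of_connected G S hSconn) v hvS
    rw [hScard] at hplen hpcnt
    have hb : 2 * (s - 1) = (p.map Option.isSome).length := by
      simp [hplen]
    have hf : s - 1 = (p.filterMap id).length := by
      rw [length_filterMap_id, hpcnt]
    refine ⟨(fun j => (p.map Option.isSome).get (Fin.cast hb j),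
      fun k => (p.filterMap id).get (Fin.cast hf k)), ?_⟩
    simp only [hF, ofFn_get_cast, buildProg_encode]
    rw [hprun [] {v} (Finset.mem_singleton_self v)]
    simp only []
    exact Finset.union_eq_right.2 (Finset.singleton_subset_iff.2 hvS)
  calc {S : Finset V | S.card = s ∧ v ∈ S ∧ (G.induce (S : Set V)).Connected}.ncard
      ≤ (Set.range F).ncard := Set.ncard_le_ncard hsub (Set.finite_range F)
    _ ≤ Fintype.card ((Fin (2 * (s - 1)) → Bool) × (Fin (s - 1) → Fin d)) := by
        rw [← Set.image_univ]
        calc (F '' Set.univ).ncard ≤ (Set.univ : Set ((Fin (2 * (s - 1)) → Bool) × (Fin (s - 1) → Fin d))).ncard :=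
              Set.ncard_image_le Set.finite_univ
          _ = _ := by rw [Set.ncard_univ, Nat.card_eq_fintype_card]
    _ = (4 * d) ^ (s - 1) := by
        rw [Fintype.card_prod, Fintype.card_fun, Fintype.card_fun,
          Fintype.card_bool, Fintype.card_fin, Fintype.card_fin, Fintype.card_fin,
          pow_mul, mul_pow]
        norm_num
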